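/- Let X be a real Banach space and f₀ ∈ X. Let (T_τ)_{τ≥0} and (F(τ))_{τ≥0} be families of bounded linear operators on X with ‖T_τ‖ ≤ 1 and ‖F(τ)‖ ≤ 1 for all τ ≥ 0. Assume that the map τ ↦ T_τ f₀ is continuous, that for each n ∈ ℕ the map τ ↦ [F(τ/n)]^n f₀ is strongly Borel measurable, and that for every R > 0, sup_{τ ∈ [0, R]} ‖[F(τ/n)]^n f₀ − T_τ f₀‖ → 0 as n → ∞. Let (ν_t)_{t≥0} be a family of Borel probability measures on [0, ∞) with the uniform tail property: for every T > 0 and ε > 0 there exists R > 0 such that ν_t([R, ∞)) < ε for all t ∈ [0, T]. Define f(t) := ∫₀^∞ T_τ f₀ dν_t(τ) and f_n(t) := ∫₀^∞ [F(τ/n)]^n f₀ dν_t(τ) as Bochner integrals. Then for every T > 0, sup_{t ∈ [0, T]} ‖f_n(t) − f(t)‖ → 0 as n → ∞. -/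

import Mathlib

open MeasureTheory Filter Topology

/-- Theorem 4.3 of the paper: approximation of subordinated (in general non-semigroup)
families `f(t) = ∫ T_τ f₀ ν_t(dτ)` by `f_n(t) = ∫ [F(τ/n)]^n f₀ ν_t(dτ)`,
locally uniformly in `t`. -/
theorem subordinated_chernoff_approximation
    {X : Type*} [NormedAddCommGroup X] [NormedSpace ℝ X] [CompleteSpace X]
    (f₀ : X) (T F : ℝ → X →L[ℝ] X)
    (hTnorm : ∀ τ : ℝ, 0 ≤ τ → ‖T τ‖ ≤ 1)
    (hFnorm : ∀ τ : ℝ, 0 ≤ τ → ‖F τ‖ ≤ 1)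
    (hTcont : Continuous fun τ => T τ f₀)
    (hFmeas : ∀ n : ℕ, StronglyMeasurable fun τ : ℝ => ((F (τ / n)) ^ n) f₀)
    (hconv : ∀ R : ℝ, 0 < R →
      TendstoUniformlyOn (fun (n : ℕ) (τ : ℝ) => ((F (τ / n)) ^ n) f₀)
        (fun τ => T τ f₀) atTop (Set.Icc 0 R))
    (ν : ℝ → Measure ℝ) [∀ t, IsProbabilityMeasure (ν t)]
    (hνsupp : ∀ t : ℝ, ν t {τ : ℝ | τ < 0} = 0)
    (htail : ∀ T' : ℝ, 0 < T' → ∀ ε : ℝ, 0 < ε → ∃ R : ℝ, 0 < R ∧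
      ∀ t ∈ Set.Icc (0 : ℝ) T', ν t (Set.Ici R) < ENNReal.ofReal ε) :
    ∀ T' : ℝ, 0 < T' →
      TendstoUniformlyOn
        (fun (n : ℕ) (t : ℝ) => ∫ τ, ((F (τ / n)) ^ n) f₀ ∂(ν t))
        (fun t => ∫ τ, T τ f₀ ∂(ν t)) atTop (Set.Icc 0 T') := by
  intro T' hT'
  rw [Metric.tendstoUniformlyOn_iff]
  intro ε hε
  -- constants
  set c : ℝ := 2 * ‖f₀‖ + ε with hc
  have hcpos : 0 < c := by positivity
  obtain ⟨R, hRpos, hRtail⟩ := htail T' hT' (ε / (4 * c)) (by positivity)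
  -- pointwise norm bound for the approximants
  have hFbound : ∀ (n : ℕ) (τ : ℝ), 0 ≤ τ → ‖((F (τ / n)) ^ n) f₀‖ ≤ ‖f₀‖ := by
    intro n τ hτ
    have h1 : ‖(F (τ / n)) ^ n‖ ≤ 1 := by
      rcases Nat.eq_zero_or_pos n with rfl | hn
      · simp only [pow_zero]; exact ContinuousLinearMap.norm_id_le
      · calc ‖(F (τ / n)) ^ n‖ ≤ ‖F (τ / n)‖ ^ n := norm_pow_le' _ hn
          _ ≤ 1 := pow_le_one₀ (norm_nonneg _) (hFnorm _ (div_nonneg hτ (Nat.cast_nonneg n)))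
    calc ‖((F (τ / n)) ^ n) f₀‖ ≤ ‖(F (τ / n)) ^ n‖ * ‖f₀‖ :=
          ContinuousLinearMap.le_opNorm _ _
      _ ≤ 1 * ‖f₀‖ := by gcongr
      _ = ‖f₀‖ := one_mul _
  have hTbound : ∀ τ : ℝ, 0 ≤ τ → ‖T τ f₀‖ ≤ ‖f₀‖ := by
    intro τ hτ
    calc ‖T τ f₀‖ ≤ ‖T τ‖ * ‖f₀‖ := ContinuousLinearMap.le_opNorm _ _
      _ ≤ 1 * ‖f₀‖ := by gcongr; exact hTnorm τ hτ
      _ = ‖f₀‖ := one_mul _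
  -- a.e. nonnegativity
  have hae : ∀ t : ℝ, ∀ᵐ τ ∂(ν t), 0 ≤ τ := by
    intro t
    rw [MeasureTheory.ae_iff]
    have : {τ : ℝ | ¬ 0 ≤ τ} = {τ : ℝ | τ < 0} := by ext τ; simp [not_le]
    rw [this]; exact hνsupp t
  -- integrability
  have hTint : ∀ t : ℝ, Integrable (fun τ => T τ f₀) (ν t) := by
    intro t
    exact Integrable.mono' (integrable_const ‖f₀‖) hTcont.aestronglyMeasurable
      ((hae t).mono fun τ hτ => hTbound τ hτ)
  have hFint : ∀ (n : ℕ) (t : ℝ), Integrable (fun τ => ((F (τ / n)) ^ n) f₀) (ν t) := by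
    intro n t
    exact Integrable.mono' (integrable_const ‖f₀‖) (hFmeas n).aestronglyMeasurable
      ((hae t).mono fun τ hτ => hFbound n τ hτ)
  -- uniform convergence on [0, R]
  have huc := (Metric.tendstoUniformlyOn_iff.mp (hconv R hRpos)) (ε / 4) (by positivity)
  filter_upwards [huc] with n hn t ht
  rw [dist_eq_norm, ← integral_sub (hTint t) (hFint n t)]
  -- dominating function
  set g : ℝ → ℝ := fun τ =>
    Set.indicator (Set.Iio R) (fun _ => ε / 4) τ + Set.indicator (Set.Ici R) (fun _ => c) τ
    with hg
  have hgint : Integrable g (ν t) := by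
    apply Integrable.add
    · exact (integrable_const _).indicator measurableSet_Iio
    · exact (integrable_const _).indicator measurableSet_Ici
  have hbound : ∀ᵐ τ ∂(ν t), ‖T τ f₀ - ((F (τ / n)) ^ n) f₀‖ ≤ g τ := by
    filter_upwards [hae t] with τ hτ
    rcases lt_or_ge τ R with hτR | hτR
    · have : g τ = ε / 4 := by
        simp [hg, Set.indicator_of_mem (Set.mem_Iio.mpr hτR),
          Set.indicator_of_notMem (by simp [Set.mem_Ici, not_le.mpr hτR] : τ ∉ Set.Ici R)]
      rw [this]
      have := hn τ ⟨hτ, le_of_lt hτR⟩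
      rw [dist_eq_norm] at this
      exact this.le
    · have : g τ = c := by
        simp [hg, Set.indicator_of_notMem (by simp [Set.mem_Iio, not_lt.mpr hτR] : τ ∉ Set.Iio R),
          Set.indicator_of_mem (Set.mem_Ici.mpr hτR)]
      rw [this]
      calc ‖T τ f₀ - ((F (τ / n)) ^ n) f₀‖ ≤ ‖T τ f₀‖ + ‖((F (τ / n)) ^ n) f₀‖ :=
            norm_sub_le _ _
        _ ≤ ‖f₀‖ + ‖f₀‖ := add_le_add (hTbound τ hτ) (hFbound n τ hτ)
        _ ≤ c := by rw [hc]; linarith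
  have key : ‖∫ τ, (T τ f₀ - ((F (τ / n)) ^ n) f₀) ∂(ν t)‖ ≤ ∫ τ, g τ ∂(ν t) :=
    norm_integral_le_of_norm_le hgint hbound
  have hgval : ∫ τ, g τ ∂(ν t)
      = (ν t (Set.Iio R)).toReal * (ε / 4) + (ν t (Set.Ici R)).toReal * c := by
    rw [hg]
    rw [integral_add ((integrable_const _).indicator measurableSet_Iio)
      ((integrable_const _).indicator measurableSet_Ici)]
    rw [integral_indicator_const _ measurableSet_Iio, integral_indicator_const _ measurableSet_Ici]
    simp [smul_eq_mul]; rfl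
  have h1 : (ν t (Set.Iio R)).toReal * (ε / 4) ≤ ε / 4 := by
    have := prob_le_one (μ := ν t) (s := Set.Iio R)
    have h' : (ν t (Set.Iio R)).toReal ≤ 1 := by
      simpa using ENNReal.toReal_mono (by simp) this
    nlinarith
  have h2 : (ν t (Set.Ici R)).toReal * c ≤ ε / 4 := by
    have htail' := hRtail t ht
    have h' : (ν t (Set.Ici R)).toReal ≤ ε / (4 * c) := by
      have := ENNReal.toReal_mono (by simp) htail'.le
      rwa [ENNReal.toReal_ofReal (by positivity)] at this
    calc (ν t (Set.Ici R)).toReal * c ≤ (ε / (4 * c)) * c := by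
          gcongr
      _ = ε / 4 := by field_simp
  calc ‖∫ τ, (T τ f₀ - ((F (τ / n)) ^ n) f₀) ∂(ν t)‖ ≤ ∫ τ, g τ ∂(ν t) := key
    _ ≤ ε / 4 + ε / 4 := by rw [hgval]; exact add_le_add h1 h2
    _ < ε := by linarith
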